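/- Let f : [a,b] → ℝ be continuous and integrable on [a,b] with 0 ≤ a < b, let k > 1, and suppose |f|^{k/(k-1)} is m-convex for some fixed m ∈ (0,1]. Then for any fixed p, q > 0, ∫_a^b (x-a)^p (b-x)^q f(x) dx ≤ (b-a)^{p+q+1} 2^{-(k-1)/k} [β(kp+1, kq+1)]^{1/k} [|f(a)|^{k/(k-1)} + m |f(b/m)|^{k/(k-1)}]^{(k-1)/k}. -/

import Mathlib

open Real Set MeasureTheory intervalIntegral

noncomputable def beta (x y : ℝ) : ℝ := ∫ t in (0:ℝ)..1, t ^ (x-1) * (1-t) ^ (y-1)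

def MConvexOn (s : Set ℝ) (m : ℝ) (g : ℝ → ℝ) : Prop :=
  ∀ x ∈ s, ∀ y ∈ s, ∀ t ∈ Set.Icc (0:ℝ) 1, g (t*x + m*(1-t)*y) ≤ t * g x + m*(1-t) * g y

theorem stmt7 (a b p q : ℝ) (f : ℝ → ℝ)
    (ha : 0 ≤ a) (hab : a < b) (hp : 0 < p) (hq : 0 < q)
    (hcont : ContinuousOn f (Set.Icc a b))
    (hint : IntervalIntegrable f volume a b)
    (k : ℝ) (hk : 1 < k)
    (m : ℝ) (hm : m ∈ Set.Ioc (0:ℝ) 1)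
    (hf : MConvexOn (Set.Icc 0 (b/m)) m (fun x => |f x| ^ (k/(k-1)))) :
    ∫ x in a..b, (x-a)^p * (b-x)^q * f x
      ≤ (b-a)^(p+q+1) * (2:ℝ)^(-((k-1)/k)) * (beta (k*p+1) (k*q+1))^(1/k)
          * (|f a| ^ (k/(k-1)) + m * |f (b/m)| ^ (k/(k-1))) ^ ((k-1)/k) := by
  obtain ⟨hm0, hm1⟩ := hm
  have hb0 : 0 < b := lt_of_le_of_lt ha hab
  set c := b - a with hcdef
  have hc0 : 0 < c := sub_pos.2 hab
  have hk0 : 0 < k := lt_trans one_pos hk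
  have hk1 : 0 < k - 1 := sub_pos.2 hk
  set k' := k / (k - 1) with hk'def
  have hk'0 : 0 < k' := div_pos hk0 hk1
  have hpq : k.HolderConjugate k' := Real.HolderConjugate.conjExponent hk
  set g : ℝ → ℝ := fun t => f (a + t * c) with hgdef
  set F : ℝ → ℝ := fun t => t ^ p * (1 - t) ^ q with hFdef
  set A := |f a| ^ k' with hAdef
  set B := |f (b/m)| ^ k' with hBdef
  have hA0 : 0 ≤ A := Real.rpow_nonneg (abs_nonneg _) _
  have hB0 : 0 ≤ B := Real.rpow_nonneg (abs_nonneg _) _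
  -- continuity
  have hmaps : Set.MapsTo (fun t : ℝ => a + t * c) (Set.Icc 0 1) (Set.Icc a b) := by
    intro t ht
    simp only [Set.mem_Icc] at ht ⊢
    have hcb : c = b - a := hcdef
    constructor
    · nlinarith [ht.1, ht.2, hc0]
    · nlinarith [ht.1, ht.2, hc0]
  have hgc : ContinuousOn g (Set.Icc 0 1) :=
    hcont.comp ((continuous_const.add (continuous_id.mul continuous_const)).continuousOn) hmaps
  have hFc : ContinuousOn F (Set.Icc 0 1) := by
    apply ContinuousOn.mul
    · exact continuousOn_id.rpow_const (fun x _ => Or.inr hp.le)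
    · exact (continuous_const.sub continuous_id).continuousOn.rpow_const (fun x _ => Or.inr hq.le)
  have toIcc : ∀ h : ℝ → ℝ, (∫ t in (0:ℝ)..1, h t) = ∫ t in Set.Icc (0:ℝ) 1, h t := by
    intro h
    rw [intervalIntegral.integral_of_le zero_le_one, ← MeasureTheory.integral_Icc_eq_integral_Ioc]
  -- Step 1: substitution
  have key1 : (∫ x in a..b, (x-a)^p * (b-x)^q * f x)
      = c ^ (p+q+1) * ∫ t in (0:ℝ)..1, F t * g t := by
    have h1 : (∫ t in (0:ℝ)..1, (c * t + a - a)^p * (b - (c * t + a))^q * f (c * t + a))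
        = c⁻¹ • ∫ x in c * 0 + a..c * 1 + a, (x-a)^p * (b-x)^q * f x :=
      intervalIntegral.integral_comp_mul_add (fun x => (x-a)^p * (b-x)^q * f x) hc0.ne' a
    have e0 : c * 0 + a = a := by ring
    have e1 : c * 1 + a = b := by rw [hcdef]; ring
    rw [e0, e1] at h1
    have h2 : (∫ t in (0:ℝ)..1, (c * t + a - a)^p * (b - (c * t + a))^q * f (c * t + a))
        = ∫ t in (0:ℝ)..1, c^(p+q) * (F t * g t) := by
      apply intervalIntegral.integral_congr
      intro t ht
      rw [Set.uIcc_of_le zero_le_one] at ht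
      show (c * t + a - a)^p * (b - (c * t + a))^q * f (c * t + a) = c^(p+q) * (F t * g t)
      have ht0 : (0:ℝ) ≤ t := ht.1
      have ht1 : (0:ℝ) ≤ 1 - t := by linarith [ht.2]
      have e2 : c * t + a - a = c * t := by ring
      have e3 : b - (c * t + a) = c * (1 - t) := by rw [hcdef]; ring
      have e4 : c * t + a = a + t * c := by ring
      rw [e2, e3, e4, Real.mul_rpow hc0.le ht0, Real.mul_rpow hc0.le ht1, Real.rpow_add hc0]
      simp only [hFdef, hgdef]
      ring
    rw [h2, intervalIntegral.integral_const_mul] at h1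
    have h3 : (∫ x in a..b, (x-a)^p * (b-x)^q * f x)
        = c * (c^(p+q) * ∫ t in (0:ℝ)..1, F t * g t) := by
      rw [h1, smul_eq_mul, ← mul_assoc, mul_inv_cancel₀ hc0.ne', one_mul]
    rw [h3, Real.rpow_add hc0 (p+q) 1, Real.rpow_one, Real.rpow_add hc0 p q]
    ring
  -- measure-theoretic setup
  have hFnn : ∀ t ∈ Set.Icc (0:ℝ) 1, 0 ≤ F t := by
    intro t ht
    exact mul_nonneg (Real.rpow_nonneg ht.1 _) (Real.rpow_nonneg (by linarith [ht.2]) _)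
  have hFint : IntegrableOn F (Set.Icc 0 1) := hFc.integrableOn_Icc
  have hFgint : IntegrableOn (fun t => F t * g t) (Set.Icc 0 1) := (hFc.mul hgc).integrableOn_Icc
  have hFagint : IntegrableOn (fun t => F t * |g t|) (Set.Icc 0 1) :=
    (hFc.mul hgc.abs).integrableOn_Icc
  have hgk'c : ContinuousOn (fun t => |g t| ^ k') (Set.Icc 0 1) :=
    hgc.abs.rpow_const (fun x _ => Or.inr hk'0.le)
  have hgk'int : IntegrableOn (fun t => |g t| ^ k') (Set.Icc 0 1) := hgk'c.integrableOn_Icc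
  -- Memℒp facts
  have hmeasF : AEStronglyMeasurable F (volume.restrict (Set.Icc (0:ℝ) 1)) :=
    hFc.aestronglyMeasurable measurableSet_Icc
  have hmeasg : AEStronglyMeasurable (fun t => |g t|) (volume.restrict (Set.Icc (0:ℝ) 1)) :=
    hgc.abs.aestronglyMeasurable measurableSet_Icc
  have hFbd : ∀ᵐ t ∂(volume.restrict (Set.Icc (0:ℝ) 1)), ‖F t‖ ≤ 1 := by
    filter_upwards [self_mem_ae_restrict (measurableSet_Icc : MeasurableSet (Set.Icc (0:ℝ) 1))]
      with t ht
    rw [Real.norm_of_nonneg (hFnn t ht)]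
    have h1 : t ^ p ≤ 1 := Real.rpow_le_one ht.1 ht.2 hp.le
    have h2 : (1-t) ^ q ≤ 1 := Real.rpow_le_one (by linarith [ht.2]) (by linarith [ht.1]) hq.le
    calc F t ≤ 1 * 1 := mul_le_mul h1 h2 (Real.rpow_nonneg (by linarith [ht.2]) _) zero_le_one
      _ = 1 := one_mul 1
  obtain ⟨C, hC⟩ := isCompact_Icc.exists_bound_of_continuousOn hgc
  have hgbd : ∀ᵐ t ∂(volume.restrict (Set.Icc (0:ℝ) 1)), ‖|g t|‖ ≤ C := by
    filter_upwards [self_mem_ae_restrict (measurableSet_Icc : MeasurableSet (Set.Icc (0:ℝ) 1))]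
      with t ht
    rw [norm_abs_eq_norm]
    exact hC t ht
  have hFmem : MemLp F (ENNReal.ofReal k) (volume.restrict (Set.Icc (0:ℝ) 1)) :=
    MemLp.of_bound hmeasF 1 hFbd
  have hgmem : MemLp (fun t => |g t|) (ENNReal.ofReal k') (volume.restrict (Set.Icc (0:ℝ) 1)) :=
    MemLp.of_bound hmeasg C hgbd
  -- Hölder
  have hold : (∫ t in Set.Icc (0:ℝ) 1, F t * |g t|)
      ≤ (∫ t in Set.Icc (0:ℝ) 1, F t ^ k) ^ (1/k) * (∫ t in Set.Icc (0:ℝ) 1, |g t| ^ k') ^ (1/k') := by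
    apply MeasureTheory.integral_mul_le_Lp_mul_Lq_of_nonneg hpq _ _ hFmem hgmem
    · filter_upwards [self_mem_ae_restrict (measurableSet_Icc : MeasurableSet (Set.Icc (0:ℝ) 1))]
        with t ht
      exact hFnn t ht
    · exact Filter.Eventually.of_forall (fun t => abs_nonneg _)
  -- ∫ F^k = beta
  have hbeta : (∫ t in Set.Icc (0:ℝ) 1, F t ^ k) = beta (k*p+1) (k*q+1) := by
    rw [beta, toIcc]
    apply MeasureTheory.setIntegral_congr_fun measurableSet_Icc
    intro t ht
    have ht0 : (0:ℝ) ≤ t := ht.1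
    have ht1 : (0:ℝ) ≤ 1 - t := by linarith [ht.2]
    simp only [hFdef]
    rw [Real.mul_rpow (Real.rpow_nonneg ht0 _) (Real.rpow_nonneg ht1 _),
      ← Real.rpow_mul ht0, ← Real.rpow_mul ht1]
    rw [show p * k = k*p+1-1 by ring, show q * k = k*q+1-1 by ring]
  have hbeta0 : 0 ≤ beta (k*p+1) (k*q+1) := by
    rw [← hbeta]
    apply MeasureTheory.setIntegral_nonneg measurableSet_Icc
    intro t ht
    exact Real.rpow_nonneg (hFnn t ht) _
  -- m-convexity bound
  have hbm : b ≤ b / m := by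
    rw [le_div_iff₀ hm0]
    nlinarith
  have hconv : ∀ t ∈ Set.Icc (0:ℝ) 1, |g t| ^ k' ≤ (1-t) * A + m * t * B := by
    intro t ht
    have hmem1 : a ∈ Set.Icc 0 (b/m) := ⟨ha, le_trans hab.le hbm⟩
    have hmem2 : b/m ∈ Set.Icc 0 (b/m) := ⟨div_nonneg hb0.le hm0.le, le_refl _⟩
    have hmem3 : (1-t) ∈ Set.Icc (0:ℝ) 1 := ⟨by linarith [ht.2], by linarith [ht.1]⟩
    have h := hf a hmem1 (b/m) hmem2 (1-t) hmem3
    simp only at h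
    have harg : (1-t)*a + m*(1-(1-t))*(b/m) = a + t * c := by
      rw [hcdef]; field_simp; ring
    rw [harg] at h
    have e5 : 1 - (1-t) = t := by ring
    rw [e5] at h
    simpa only [hgdef, hAdef, hBdef, hk'def, mul_assoc] using h
  have hint3 : (∫ t in Set.Icc (0:ℝ) 1, |g t| ^ k') ≤ (A + m*B)/2 := by
    have hlin : IntegrableOn (fun t : ℝ => (1-t) * A + m * t * B) (Set.Icc 0 1) :=
      (Continuous.continuousOn (((continuous_const.sub continuous_id).mul continuous_const).add ((continuous_const.mul continuous_id).mul continuous_const))).integrableOn_Icc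
    have h1 : (∫ t in Set.Icc (0:ℝ) 1, |g t| ^ k')
        ≤ ∫ t in Set.Icc (0:ℝ) 1, ((1-t) * A + m * t * B) :=
      MeasureTheory.setIntegral_mono_on hgk'int hlin measurableSet_Icc hconv
    have h2 : (∫ t in Set.Icc (0:ℝ) 1, ((1-t) * A + m * t * B)) = (A + m*B)/2 := by
      rw [← toIcc]
      have h3 : (fun t : ℝ => (1-t) * A + m * t * B) = fun t => (m*B - A) * t + A := by
        funext t; ring
      rw [h3]
      have i1 : IntervalIntegrable (fun t : ℝ => (m*B - A) * t) volume 0 1 :=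
        (by fun_prop : Continuous fun t : ℝ => (m*B-A)*t).intervalIntegrable 0 1
      rw [intervalIntegral.integral_add i1 (intervalIntegrable_const),
        intervalIntegral.integral_const_mul, integral_id, intervalIntegral.integral_const]
      norm_num
      ring
    linarith
  have hgk'nn : 0 ≤ ∫ t in Set.Icc (0:ℝ) 1, |g t| ^ k' := by
    apply MeasureTheory.setIntegral_nonneg measurableSet_Icc
    intro t ht
    exact Real.rpow_nonneg (abs_nonneg _) _
  -- combine
  have hImono : (∫ t in (0:ℝ)..1, F t * g t) ≤ ∫ t in Set.Icc (0:ℝ) 1, F t * |g t| := by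
    rw [toIcc]
    apply MeasureTheory.setIntegral_mono_on hFgint hFagint measurableSet_Icc
    intro t ht
    exact mul_le_mul_of_nonneg_left (le_abs_self _) (hFnn t ht)
  have h1k' : 1/k' = (k-1)/k := by rw [hk'def, one_div_div]
  have hI : (∫ t in (0:ℝ)..1, F t * g t)
      ≤ (beta (k*p+1) (k*q+1)) ^ (1/k) * ((A + m*B)/2) ^ ((k-1)/k) := by
    calc (∫ t in (0:ℝ)..1, F t * g t) ≤ ∫ t in Set.Icc (0:ℝ) 1, F t * |g t| := hImono
      _ ≤ (∫ t in Set.Icc (0:ℝ) 1, F t ^ k) ^ (1/k)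
            * (∫ t in Set.Icc (0:ℝ) 1, |g t| ^ k') ^ (1/k') := hold
      _ ≤ (beta (k*p+1) (k*q+1)) ^ (1/k) * ((A + m*B)/2) ^ ((k-1)/k) := by
          rw [hbeta, h1k']
          apply mul_le_mul_of_nonneg_left _ (Real.rpow_nonneg hbeta0 _)
          exact Real.rpow_le_rpow hgk'nn hint3 (by positivity)
  have hsplit : ((A + m*B)/2) ^ ((k-1)/k) = (2:ℝ)^(-((k-1)/k)) * (A + m*B) ^ ((k-1)/k) := by
    rw [Real.div_rpow (by positivity) (by norm_num), Real.rpow_neg (by norm_num)]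
    ring
  rw [key1]
  have hcpos : 0 ≤ c ^ (p+q+1) := Real.rpow_nonneg hc0.le _
  calc c^(p+q+1) * (∫ t in (0:ℝ)..1, F t * g t)
      ≤ c^(p+q+1) * ((beta (k*p+1) (k*q+1)) ^ (1/k) * ((A + m*B)/2) ^ ((k-1)/k)) :=
        mul_le_mul_of_nonneg_left hI hcpos
    _ = c^(p+q+1) * (2:ℝ)^(-((k-1)/k)) * (beta (k*p+1) (k*q+1))^(1/k)
          * (|f a| ^ (k/(k-1)) + m * |f (b/m)| ^ (k/(k-1))) ^ ((k-1)/k) := by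
        rw [hsplit, hAdef, hBdef, hk'def]
        ring
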